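/- Let E be a finite set, ℓ ≥ 1 an integer, and g : 2^E → ℝ a monotone nondecreasing function with g(∅) = 0 and g(A) ≥ 0 for all A, having submodularity ratio at least γ ∈ (0,1]. Let w : E → ℝ≥0 and define the additive function l(A) = Σ_{e∈A} w(e). Let S ⊆ E × [ℓ] have pairwise distinct first coordinates, let OPT ⊆ E with |OPT| = |S|, and for each j ∈ [ℓ] let h_j : S → OPT be a bijection with h_j((u,k)) = u whenever u ∈ OPT. Define Φ_f(T) = Φ_g(T) + l(π_{[ℓ]}(T)). If S is a local maximum for the allowed swaps, i.e. Φ_f(S) ≥ Φ_f(S − (u,k) + (h_j((u,k)), j)) for every (u,k) ∈ S and every j ∈ [ℓ], then g(π_{[ℓ]}(S)) + l(π_{[ℓ]}(S)) ≥ (1 − (1 + γ³/ℓ)^{−ℓ})·g(OPT) + l(OPT). -/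

import Mathlib

open Finset

/-- `π_J(S)`: first coordinates of pairs in `S` whose second coordinate lies in `J`. -/
def proj {E : Type*} [DecidableEq E] (S : Finset (E × ℕ)) (J : Finset ℕ) : Finset E :=
  (S.filter (fun p => p.2 ∈ J)).image Prod.fst

/-- `α_i = (1+c)^(i-1) / C(ℓ-1, i-1)`. -/
noncomputable def alphaCoef (ℓ : ℕ) (c : ℝ) (i : ℕ) : ℝ :=
  (1 + c) ^ (i - 1) / ((ℓ - 1).choose (i - 1) : ℝ)

/-- The potential `Φ_g(S) = (γ/ℓ)(1+γ³/ℓ)^{-ℓ} Σ_{∅≠J⊆[ℓ]} α_{|J|} g(π_J(S))`. -/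
noncomputable def Phi {E : Type*} [DecidableEq E] (ℓ : ℕ) (γ : ℝ) (g : Finset E → ℝ)
    (S : Finset (E × ℕ)) : ℝ :=
  (γ / ℓ) * (1 + γ ^ 3 / ℓ) ^ (-(ℓ : ℤ)) *
    ∑ J ∈ (Finset.Icc 1 ℓ).powerset.filter (fun J => J.Nonempty),
      alphaCoef ℓ (γ ^ 3 / ℓ) J.card * g (proj S J)

section ProjLemmas
variable {E : Type*} [DecidableEq E]

lemma mem_proj {S : Finset (E × ℕ)} {J : Finset ℕ} {u : E} :
    u ∈ proj S J ↔ ∃ p ∈ S, p.2 ∈ J ∧ p.1 = u := by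
  constructor
  · intro hu
    obtain ⟨p, hp, h1⟩ := Finset.mem_image.1 hu
    obtain ⟨hpS, hpJ⟩ := Finset.mem_filter.1 hp
    exact ⟨p, hpS, hpJ, h1⟩
  · rintro ⟨p, hp, h2, h1⟩
    exact Finset.mem_image.2 ⟨p, Finset.mem_filter.2 ⟨hp, h2⟩, h1⟩

lemma proj_mono {S : Finset (E × ℕ)} {J J' : Finset ℕ} (hJ : J ⊆ J') :
    proj S J ⊆ proj S J' := by
  intro u hu
  rw [mem_proj] at hu ⊢
  obtain ⟨p, hp, h2, h1⟩ := hu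
  exact ⟨p, hp, hJ h2, h1⟩

lemma proj_union {S : Finset (E × ℕ)} {J J' : Finset ℕ} :
    proj S (J ∪ J') = proj S J ∪ proj S J' := by
  ext u
  simp only [mem_proj, Finset.mem_union]
  constructor
  · rintro ⟨p, hp, h2, h1⟩
    rcases h2 with h | h
    · exact Or.inl ⟨p, hp, h, h1⟩
    · exact Or.inr ⟨p, hp, h, h1⟩
  · rintro (⟨p, hp, h2, h1⟩ | ⟨p, hp, h2, h1⟩)
    · exact ⟨p, hp, Or.inl h2, h1⟩
    · exact ⟨p, hp, Or.inr h2, h1⟩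

lemma proj_insert {S : Finset (E × ℕ)} {J : Finset ℕ} {q : E × ℕ} :
    proj (insert q S) J = if q.2 ∈ J then insert q.1 (proj S J) else proj S J := by
  unfold proj
  rw [Finset.filter_insert]
  split
  · rw [Finset.image_insert]
  · rfl

lemma proj_empty {S : Finset (E × ℕ)} : proj S (∅ : Finset ℕ) = ∅ := by
  simp [proj]

end ProjLemmas

section Telescope
variable {E : Type*} [DecidableEq E] (g : Finset E → ℝ) (γ : ℝ)

lemma gain_telescope (hmono : ∀ A B : Finset E, A ⊆ B → g A ≤ g B)
    (hratio : ∀ T A : Finset E, T ⊆ A → ∀ e ∉ A,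
      g (insert e T) - g T ≥ γ * (g (insert e A) - g A)) :
    ∀ (B X : Finset E), γ * (g (X ∪ B) - g X) ≤ ∑ o ∈ B, (g (insert o X) - g X) := by
  intro B
  induction B using Finset.induction with
  | empty => intro X; simp
  | @insert b B' hb ih =>
    intro X
    rw [Finset.sum_insert hb]
    have key : γ * (g (X ∪ insert b B') - g (X ∪ B')) ≤ g (insert b X) - g X := by
      rw [Finset.union_insert]
      by_cases hbX : b ∈ X ∪ B'
      · rw [Finset.insert_eq_self.2 hbX]
        have : (0:ℝ) ≤ g (insert b X) - g X := by
          have := hmono X (insert b X) (Finset.subset_insert _ _)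
          linarith
        simpa using this
      · exact hratio X (X ∪ B') Finset.subset_union_left b hbX
    have := ih X
    have expand : γ * (g (X ∪ insert b B') - g X)
        = γ * (g (X ∪ insert b B') - g (X ∪ B')) + γ * (g (X ∪ B') - g X) := by ring
    linarith

lemma removal_telescope
    (hratio : ∀ T A : Finset E, T ⊆ A → ∀ e ∉ A,
      g (insert e T) - g T ≥ γ * (g (insert e A) - g A)) :
    ∀ (B X : Finset E), Disjoint X B →
      ∑ u ∈ B, γ * (g (X ∪ B) - g ((X ∪ B).erase u)) ≤ g (X ∪ B) - g X := by
  intro B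
  induction B using Finset.induction with
  | empty => intro X _; simp
  | @insert b B' hb ih =>
    intro X hdisj
    have hbX : b ∉ X := fun hbX => (Finset.disjoint_left.1 hdisj hbX (Finset.mem_insert_self _ _))
    have hXB : X ∪ insert b B' = insert b (X ∪ B') := by
      rw [Finset.union_insert]
    have hbXB' : b ∉ X ∪ B' := by
      simp only [Finset.mem_union]
      rintro (h | h)
      · exact hbX h
      · exact hb h
    rw [Finset.sum_insert hb]
    have h1 : γ * (g (X ∪ insert b B') - g ((X ∪ insert b B').erase b))
        ≤ g (insert b X) - g X := by
      have herase : (X ∪ insert b B').erase b = X ∪ B' := by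
        rw [hXB, Finset.erase_insert hbXB']
      rw [herase, hXB]
      exact hratio X (X ∪ B') Finset.subset_union_left b hbXB'
    have hdisj' : Disjoint (insert b X) B' := by
      rw [Finset.disjoint_left]
      intro a ha haB'
      rcases Finset.mem_insert.1 ha with rfl | haX
      · exact hb haB'
      · exact Finset.disjoint_left.1 hdisj haX (Finset.mem_insert_of_mem haB')
    have hsame : insert b X ∪ B' = X ∪ insert b B' := by
      rw [Finset.insert_union, Finset.union_insert]
    have h2 := ih (insert b X) hdisj'
    rw [hsame] at h2
    linarith

end Telescope

set_option maxHeartbeats 1000000 in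
theorem stmt_1 {E : Type*} [Fintype E] [DecidableEq E] (ℓ : ℕ) (hℓ : 1 ≤ ℓ)
    (g : Finset E → ℝ) (γ : ℝ) (hγ0 : 0 < γ) (hγ1 : γ ≤ 1)
    (hmono : ∀ A B : Finset E, A ⊆ B → g A ≤ g B)
    (hempty : g ∅ = 0) (hnonneg : ∀ A : Finset E, 0 ≤ g A)
    (hratio : ∀ T A : Finset E, T ⊆ A → ∀ e ∉ A,
      g (insert e T) - g T ≥ γ * (g (insert e A) - g A))
    (w : E → ℝ) (hw : ∀ e, 0 ≤ w e)
    (l : Finset E → ℝ) (hl : ∀ A : Finset E, l A = ∑ e ∈ A, w e)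
    (S : Finset (E × ℕ)) (hS : ∀ p ∈ S, p.2 ∈ Finset.Icc 1 ℓ)
    (hdist : ∀ p ∈ S, ∀ q ∈ S, p.1 = q.1 → p = q)
    (OPT : Finset E) (hcard : OPT.card = S.card)
    (h : ℕ → E × ℕ → E)
    (hbij : ∀ j ∈ Finset.Icc 1 ℓ, Set.BijOn (h j) ↑S ↑OPT)
    (hfix : ∀ j ∈ Finset.Icc 1 ℓ, ∀ p ∈ S, p.1 ∈ OPT → h j p = p.1)
    (Φf : Finset (E × ℕ) → ℝ)
    (hΦf : ∀ T : Finset (E × ℕ), Φf T = Phi ℓ γ g T + l (proj T (Finset.Icc 1 ℓ)))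
    (hlocal : ∀ p ∈ S, ∀ j ∈ Finset.Icc 1 ℓ,
      Φf S ≥ Φf (insert (h j p, j) (S.erase p))) :
    g (proj S (Finset.Icc 1 ℓ)) + l (proj S (Finset.Icc 1 ℓ)) ≥
      (1 - (1 + γ ^ 3 / ℓ) ^ (-(ℓ : ℤ))) * g OPT + l OPT := by
  classical
  set L : Finset ℕ := Finset.Icc 1 ℓ with hLdef
  set c : ℝ := γ ^ 3 / ℓ with hcdef
  set 𝒥 : Finset (Finset ℕ) := L.powerset.filter (fun J => J.Nonempty) with h𝒥def
  set α : ℕ → ℝ := alphaCoef ℓ c with hαdef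
  set β : ℝ := γ / ℓ * (1 + c) ^ (-(ℓ : ℤ)) with hβdef
  set A : Finset E := proj S L with hAdef
  have hℓR : (0:ℝ) < ℓ := by positivity
  have hc0 : 0 < c := by positivity
  have h1c : (0:ℝ) < 1 + c := by linarith
  have hLcard : L.card = ℓ := by rw [hLdef, Nat.card_Icc]; omega
  have hzpow : (1 + c) ^ (-(ℓ : ℤ)) = ((1 + c) ^ ℓ)⁻¹ := by
    rw [zpow_neg, zpow_natCast]
  have hβpos : 0 < β := by
    rw [hβdef, hzpow]; positivity
  have hαpos : ∀ i, 1 ≤ i → i ≤ ℓ → 0 < α i := by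
    intro i h1 h2
    rw [hαdef, alphaCoef]
    have : 0 < ((ℓ - 1).choose (i - 1) : ℝ) := by
      have : 0 < (ℓ - 1).choose (i - 1) := Nat.choose_pos (by omega)
      exact_mod_cast this
    positivity
  have hJprop : ∀ J ∈ 𝒥, J ⊆ L ∧ J.Nonempty := by
    intro J hJ
    rw [h𝒥def, Finset.mem_filter, Finset.mem_powerset] at hJ
    exact hJ
  have hJcard : ∀ J ∈ 𝒥, 1 ≤ J.card ∧ J.card ≤ ℓ := by
    intro J hJ
    obtain ⟨hsub, hne⟩ := hJprop J hJ
    constructor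
    · exact Finset.card_pos.2 hne
    · rw [← hLcard]; exact Finset.card_le_card hsub
  -- distinct first coordinates facts
  have hmem_iff : ∀ p ∈ S, ∀ J : Finset ℕ, (p.1 ∈ proj S J ↔ p.2 ∈ J) := by
    intro p hp J
    constructor
    · intro hmem
      rw [mem_proj] at hmem
      obtain ⟨q, hq, hq2, hq1⟩ := hmem
      have : q = p := hdist q hq p hp hq1
      subst this; exact hq2
    · intro h2
      exact mem_proj.2 ⟨p, hp, h2, rfl⟩
  have hproj_erase : ∀ p ∈ S, ∀ J : Finset ℕ,
      proj (S.erase p) J = (proj S J).erase p.1 := by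
    intro p hp J
    ext u
    rw [mem_proj, Finset.mem_erase, mem_proj]
    constructor
    · rintro ⟨q, hq, hq2, hq1⟩
      have hqS := Finset.mem_of_mem_erase hq
      have hqp : q ≠ p := Finset.ne_of_mem_erase hq
      refine ⟨?_, q, hqS, hq2, hq1⟩
      intro hup
      exact hqp (hdist q hqS p hp (by rw [hq1, hup]))
    · rintro ⟨hne, q, hq, hq2, hq1⟩
      refine ⟨q, ?_, hq2, hq1⟩
      refine Finset.mem_erase.2 ⟨?_, hq⟩
      intro hqp; subst hqp; exact hne hq1.symm
  have hprojL : A = S.image Prod.fst := by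
    rw [hAdef]
    unfold proj
    rw [Finset.filter_true_of_mem hS]
  have hpA : ∀ p ∈ S, p.1 ∈ A := by
    intro p hp
    rw [hAdef]
    exact (hmem_iff p hp L).2 (hS p hp)
  -- h j p facts
  have hhopt : ∀ j ∈ L, ∀ p ∈ S, h j p ∈ OPT := by
    intro j hj p hp
    exact (hbij j hj).mapsTo hp
  have hhfix : ∀ j ∈ L, ∀ p ∈ S, h j p ∈ A → h j p = p.1 := by
    intro j hj p hp hmem
    rw [hAdef, mem_proj] at hmem
    obtain ⟨q, hq, hq2, hq1⟩ := hmem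
    have hq1opt : q.1 ∈ OPT := by rw [hq1]; exact hhopt j hj p hp
    have : h j q = q.1 := hfix j hj q hq hq1opt
    have hqp : q = p := (hbij j hj).injOn hq hp (by rw [this, hq1])
    rw [← hq1, hqp]
  -- new configuration projections
  have hA'J : ∀ p ∈ S, ∀ j, ∀ J : Finset ℕ,
      proj (insert (h j p, j) (S.erase p)) J
        = if j ∈ J then insert (h j p) ((proj S J).erase p.1)
          else (proj S J).erase p.1 := by
    intro p hp j J
    rw [proj_insert, hproj_erase p hp J]
  -- sums over S via h j
  have hsum_h : ∀ j ∈ L, ∀ F : E → ℝ, ∑ p ∈ S, F (h j p) = ∑ o ∈ OPT, F o := by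
    intro j hj F
    apply Finset.sum_bij (fun p _ => h j p)
    · intro a ha; exact hhopt j hj a ha
    · intro a ha b hb hab; exact (hbij j hj).injOn ha hb hab
    · intro o ho
      obtain ⟨p, hp, hpo⟩ := (hbij j hj).surjOn ho
      exact ⟨p, hp, hpo⟩
    · intro a _; rfl
  have hsum_w1 : ∑ p ∈ S, w p.1 = l A := by
    rw [hl, hprojL]
    rw [Finset.sum_image]
    intro p hp q hq hpq
    exact hdist p hp q hq hpq
  -- abbreviations
  have hμ : ∀ J ∈ 𝒥, ∀ j ∈ L, ∀ p ∈ S,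
      γ * (g (insert (h j p) (proj S J)) - g (proj S J))
        ≤ g (insert (h j p) ((proj S J).erase p.1)) - g ((proj S J).erase p.1) := by
    intro J hJ j hj p hp
    by_cases he : h j p ∈ proj S J
    · have heA : h j p ∈ A := by
        rw [hAdef]
        exact proj_mono (hJprop J hJ).1 he
      have hep : h j p = p.1 := hhfix j hj p hp heA
      have hp1J : p.1 ∈ proj S J := by rw [← hep]; exact he
      have h1 : insert (h j p) (proj S J) = proj S J := Finset.insert_eq_self.2 he
      have h2 : insert (h j p) ((proj S J).erase p.1) = proj S J := by
        rw [hep, Finset.insert_erase hp1J]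
      rw [h1, h2]
      have := hmono ((proj S J).erase p.1) (proj S J) (Finset.erase_subset _ _)
      linarith
    · exact hratio ((proj S J).erase p.1) (proj S J) (Finset.erase_subset _ _) (h j p) he
  have hMj : ∀ J ∈ 𝒥, ∀ j ∈ L,
      γ ^ 2 * (g OPT - g (proj S J))
        ≤ ∑ p ∈ S, (g (insert (h j p) ((proj S J).erase p.1)) - g ((proj S J).erase p.1)) := by
    intro J hJ j hj
    have step1 : ∑ p ∈ S, γ * (g (insert (h j p) (proj S J)) - g (proj S J))
        ≤ ∑ p ∈ S, (g (insert (h j p) ((proj S J).erase p.1)) - g ((proj S J).erase p.1)) :=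
      Finset.sum_le_sum (fun p hp => hμ J hJ j hj p hp)
    have step2 : ∑ p ∈ S, γ * (g (insert (h j p) (proj S J)) - g (proj S J))
        = γ * ∑ o ∈ OPT, (g (insert o (proj S J)) - g (proj S J)) := by
      rw [← Finset.mul_sum]
      congr 1
      exact hsum_h j hj (fun o => g (insert o (proj S J)) - g (proj S J))
    have step3 : γ * (g (proj S J ∪ OPT) - g (proj S J))
        ≤ ∑ o ∈ OPT, (g (insert o (proj S J)) - g (proj S J)) :=
      gain_telescope g γ hmono hratio OPT (proj S J)
    have step4 : g OPT ≤ g (proj S J ∪ OPT) :=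
      hmono OPT _ Finset.subset_union_right
    nlinarith [hγ0, sq_nonneg γ]
  have hRJ : ∀ J ∈ 𝒥,
      γ * ∑ p ∈ S, (g (proj S J) - g ((proj S J).erase p.1))
        ≤ ∑ k ∈ J, (g (proj S J) - g (proj S (J.erase k))) := by
    intro J hJ
    have hfil : ∑ p ∈ S, (g (proj S J) - g ((proj S J).erase p.1))
        = ∑ p ∈ S.filter (fun p => p.2 ∈ J), (g (proj S J) - g ((proj S J).erase p.1)) := by
      symm
      apply Finset.sum_filter_of_ne
      intro p hp hne
      by_contra hpJ
      have : p.1 ∉ proj S J := fun hmem => hpJ ((hmem_iff p hp J).1 hmem)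
      rw [Finset.erase_eq_of_notMem this] at hne
      simp at hne
    have hfib : ∑ p ∈ S.filter (fun p => p.2 ∈ J), (g (proj S J) - g ((proj S J).erase p.1))
        = ∑ k ∈ J, ∑ p ∈ S.filter (fun p => p.2 = k), (g (proj S J) - g ((proj S J).erase p.1)) := by
      have hmt : ∀ p ∈ S.filter (fun p => p.2 ∈ J), (fun (p : E × ℕ) => p.2) p ∈ J :=
        fun p hp => (Finset.mem_filter.1 hp).2
      rw [← Finset.sum_fiberwise_of_maps_to hmt
        (fun p => g (proj S J) - g ((proj S J).erase p.1))]
      apply Finset.sum_congr rfl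
      intro k hk
      congr 1
      rw [Finset.filter_filter]
      apply Finset.filter_congr
      intro p _
      constructor
      · rintro ⟨_, h2⟩; exact h2
      · intro h2; exact ⟨by rw [h2]; exact hk, h2⟩
    have himg : ∀ k ∈ J, ∑ p ∈ S.filter (fun p => p.2 = k),
          (g (proj S J) - g ((proj S J).erase p.1))
        = ∑ u ∈ proj S {k}, (g (proj S J) - g ((proj S J).erase u)) := by
      intro k hk
      have : proj S {k} = (S.filter (fun p => p.2 = k)).image Prod.fst := by
        unfold proj
        congr 1
        apply Finset.filter_congr
        intro p _
        simp
      rw [this, Finset.sum_image]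
      intro p hp q hq hpq
      exact hdist p (Finset.mem_filter.1 hp).1 q (Finset.mem_filter.1 hq).1 hpq
    have hperk : ∀ k ∈ J, γ * ∑ u ∈ proj S {k}, (g (proj S J) - g ((proj S J).erase u))
        ≤ g (proj S J) - g (proj S (J.erase k)) := by
      intro k hk
      have hJk : (J.erase k) ∪ {k} = J := by
        ext x
        simp only [Finset.mem_union, Finset.mem_erase, Finset.mem_singleton]
        constructor
        · rintro (⟨_, hx⟩ | rfl)
          · exact hx
          · exact hk
        · intro hx
          by_cases hxk : x = k
          · exact Or.inr hxk
          · exact Or.inl ⟨hxk, hx⟩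
      have hunion : proj S (J.erase k) ∪ proj S {k} = proj S J := by
        rw [← proj_union, hJk]
      have hdisj : Disjoint (proj S (J.erase k)) (proj S {k}) := by
        rw [Finset.disjoint_left]
        intro u hu1 hu2
        rw [mem_proj] at hu1 hu2
        obtain ⟨q, hq, hq2, hq1⟩ := hu1
        obtain ⟨r, hr, hr2, hr1⟩ := hu2
        have : q = r := hdist q hq r hr (by rw [hq1, hr1])
        rw [Finset.mem_singleton] at hr2
        rw [Finset.mem_erase] at hq2
        exact hq2.1 (by rw [this, hr2])
      have := removal_telescope g γ hratio (proj S {k}) (proj S (J.erase k)) hdisj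
      rw [hunion] at this
      rw [Finset.mul_sum]
      exact this
    calc γ * ∑ p ∈ S, (g (proj S J) - g ((proj S J).erase p.1))
        = ∑ k ∈ J, γ * ∑ u ∈ proj S {k}, (g (proj S J) - g ((proj S J).erase u)) := by
          rw [hfil, hfib, Finset.mul_sum]
          apply Finset.sum_congr rfl
          intro k hk
          rw [himg k hk]
      _ ≤ ∑ k ∈ J, (g (proj S J) - g (proj S (J.erase k))) :=
          Finset.sum_le_sum (fun k hk => hperk k hk)
  -- the exact coefficient identity
  have hcoeff : ∀ i : ℕ, 1 ≤ i → i ≤ ℓ - 1 →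
      (1 + c) * i * α i = ((ℓ - i : ℕ) : ℝ) * α (i + 1) := by
    intro i h1 h2
    have hnat : (ℓ - 1).choose i * i = (ℓ - 1).choose (i - 1) * (ℓ - i) := by
      have hh := Nat.choose_succ_right_eq (ℓ - 1) (i - 1)
      have hi : i - 1 + 1 = i := by omega
      rw [hi] at hh
      have hsub : ℓ - 1 - (i - 1) = ℓ - i := by omega
      rw [hsub] at hh
      exact hh
    have hp1 : 0 < (ℓ - 1).choose (i - 1) := Nat.choose_pos (by omega)
    have hp2 : 0 < (ℓ - 1).choose i := Nat.choose_pos (by omega)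
    have hcast : ((ℓ - 1).choose i : ℝ) * (i : ℝ)
        = ((ℓ - 1).choose (i - 1) : ℝ) * ((ℓ - i : ℕ) : ℝ) := by
      exact_mod_cast congrArg (Nat.cast : ℕ → ℝ) hnat
    rw [hαdef]
    unfold alphaCoef
    have hi1 : i + 1 - 1 = i := by omega
    rw [hi1]
    have hpow : (1 + c) * (1 + c) ^ (i - 1) = (1 + c) ^ i := by
      rw [← pow_succ']
      congr 1
      omega
    have hC1 : ((ℓ - 1).choose (i - 1) : ℝ) ≠ 0 := by positivity
    have hC2 : ((ℓ - 1).choose i : ℝ) ≠ 0 := by positivity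
    rw [← hpow]
    have hI1 : ((ℓ - 1).choose (i - 1) : ℝ) * ((ℓ - 1).choose (i - 1) : ℝ)⁻¹ = 1 := mul_inv_cancel₀ hC1
    have hI2 : ((ℓ - 1).choose i : ℝ) * ((ℓ - 1).choose i : ℝ)⁻¹ = 1 := mul_inv_cancel₀ hC2
    rw [div_eq_mul_inv, div_eq_mul_inv]
    linear_combination ((1 + c) * (1 + c) ^ (i - 1)) * ((ℓ - 1).choose (i - 1) : ℝ)⁻¹ * ((ℓ - 1).choose i : ℝ)⁻¹ * hcast
      - ((1 + c) * (1 + c) ^ (i - 1)) * (i : ℝ) * ((ℓ - 1).choose (i - 1) : ℝ)⁻¹ * hI2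
      + ((1 + c) * (1 + c) ^ (i - 1)) * ((ℓ - i : ℕ) : ℝ) * ((ℓ - 1).choose i : ℝ)⁻¹ * hI1
  have hαℓ : α ℓ = (1 + c) ^ (ℓ - 1) := by
    rw [hαdef, alphaCoef, Nat.choose_self]; simp
  -- reindexing
  have hreindex : ∀ F : Finset ℕ → ℝ,
      ∑ J ∈ 𝒥, ∑ k ∈ J, (α J.card * F (J.erase k))
        = ∑ K ∈ L.powerset, (((L \ K).card : ℝ) * (α (K.card + 1) * F K)) := by
    intro F
    have hRHS : ∑ K ∈ L.powerset, (((L \ K).card : ℝ) * (α (K.card + 1) * F K))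
        = ∑ K ∈ L.powerset, ∑ k ∈ L \ K, (α (K.card + 1) * F K) := by
      apply Finset.sum_congr rfl
      intro K _
      rw [Finset.sum_const, nsmul_eq_mul]
    rw [hRHS, Finset.sum_sigma', Finset.sum_sigma']
    apply Finset.sum_nbij' (i := fun x => (⟨x.1.erase x.2, x.2⟩ : Σ _ : Finset ℕ, ℕ))
      (j := fun x => (⟨insert x.2 x.1, x.2⟩ : Σ _ : Finset ℕ, ℕ))
    · rintro ⟨J, k⟩ hx
      rw [Finset.mem_sigma] at hx
      obtain ⟨hJ, hk⟩ := hx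
      obtain ⟨hJL, _⟩ := hJprop J hJ
      rw [Finset.mem_sigma]
      constructor
      · rw [Finset.mem_powerset]
        exact (Finset.erase_subset _ _).trans hJL
      · rw [Finset.mem_sdiff]
        exact ⟨hJL hk, Finset.notMem_erase _ _⟩
    · rintro ⟨K, k⟩ hx
      rw [Finset.mem_sigma] at hx
      obtain ⟨hK, hk⟩ := hx
      rw [Finset.mem_powerset] at hK
      rw [Finset.mem_sdiff] at hk
      rw [Finset.mem_sigma]
      constructor
      · rw [h𝒥def, Finset.mem_filter, Finset.mem_powerset]
        exact ⟨Finset.insert_subset hk.1 hK, Finset.insert_nonempty _ _⟩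
      · exact Finset.mem_insert_self _ _
    · rintro ⟨J, k⟩ hx
      rw [Finset.mem_sigma] at hx
      rw [Finset.insert_erase hx.2]
    · rintro ⟨K, k⟩ hx
      rw [Finset.mem_sigma] at hx
      obtain ⟨_, hk⟩ := hx
      rw [Finset.mem_sdiff] at hk
      rw [Finset.erase_insert hk.2]
    · rintro ⟨J, k⟩ hx
      rw [Finset.mem_sigma] at hx
      simp only
      rw [Finset.card_erase_add_one hx.2]
  -- identity 1
  have hpow_split : ∀ G : Finset ℕ → ℝ, G ∅ = 0 →
      ∑ K ∈ L.powerset, G K = ∑ J ∈ 𝒥, G J := by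
    intro G hG0
    rw [← Finset.sum_filter_add_sum_filter_not L.powerset (fun J => J.Nonempty) G]
    have hempt : L.powerset.filter (fun J => ¬J.Nonempty) = {∅} := by
      ext K
      simp only [Finset.mem_filter, Finset.mem_powerset, Finset.mem_singleton,
        Finset.not_nonempty_iff_eq_empty]
      constructor
      · rintro ⟨_, hK⟩; exact hK
      · rintro rfl; exact ⟨Finset.empty_subset _, rfl⟩
    rw [hempt, Finset.sum_singleton, hG0, h𝒥def, add_zero]
  have hLmem : L ∈ 𝒥 := by
    rw [h𝒥def, Finset.mem_filter, Finset.mem_powerset]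
    refine ⟨Finset.Subset.refl _, ⟨1, ?_⟩⟩
    rw [hLdef, Finset.mem_Icc]
    omega
  have hident1 : ∑ J ∈ 𝒥, α J.card * ((1 + c) * J.card * g (proj S J))
        - ∑ J ∈ 𝒥, ∑ k ∈ J, (α J.card * g (proj S (J.erase k)))
      = (ℓ : ℝ) * (1 + c) ^ ℓ * g A := by
    rw [hreindex (fun K => g (proj S K))]
    have h0 : (((L \ (∅ : Finset ℕ)).card : ℝ) * (α ((∅ : Finset ℕ).card + 1) * g (proj S ∅))) = 0 := by
      rw [proj_empty, hempty]
      ring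
    rw [hpow_split _ h0]
    rw [← Finset.sum_sub_distrib]
    rw [Finset.sum_eq_single_of_mem L hLmem]
    · have hsd : (L \ L).card = 0 := by rw [Finset.sdiff_self]; rfl
      rw [hsd, hLcard, hαℓ, hAdef]
      have hp : (1 + c) ^ (ℓ - 1) * (1 + c) = (1 + c) ^ ℓ := by
        rw [← pow_succ]
        congr 1
        omega
      push_cast
      linear_combination ((ℓ : ℝ) * g (proj S L)) * hp
    · intro J hJ hJL
      have hJsubL := (hJprop J hJ).1
      have hcardlt : J.card < ℓ := by
        rw [← hLcard]
        exact Finset.card_lt_card (Finset.ssubset_iff_subset_ne.2 ⟨hJsubL, hJL⟩)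
      have hsd : ((L \ J).card : ℝ) = ((ℓ - J.card : ℕ) : ℝ) := by
        rw [Finset.card_sdiff_of_subset hJsubL, hLcard]
      rw [hsd]
      have hcc := hcoeff J.card (hJcard J hJ).1 (by omega)
      linear_combination (g (proj S J)) * hcc
  -- identity 2
  have hident2 : ∑ J ∈ 𝒥, α J.card * (J.card : ℝ)
      = (ℓ : ℝ) * ∑ i ∈ Finset.range ℓ, (1 + c) ^ i := by
    have h0 : α (∅ : Finset ℕ).card * ((∅ : Finset ℕ).card : ℝ) = 0 := by
      rw [Finset.card_empty]
      push_cast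
      ring
    rw [← hpow_split (fun J => α J.card * (J.card : ℝ)) h0]
    rw [Finset.sum_powerset, hLcard]
    have hinner : ∀ j ∈ Finset.range (ℓ + 1),
        ∑ K ∈ Finset.powersetCard j L, (α K.card * (K.card : ℝ))
          = (ℓ.choose j : ℝ) * (α j * j) := by
      intro j _
      have := Finset.sum_powersetCard j L (fun m => α m * (m : ℝ))
      rw [this, hLcard, nsmul_eq_mul]
    rw [Finset.sum_congr rfl hinner]
    have hterm : ∀ j ∈ Finset.range (ℓ + 1), j ≠ 0 →
        (ℓ.choose j : ℝ) * (α j * j) = (ℓ : ℝ) * (1 + c) ^ (j - 1) := by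
      intro j hj hj0
      rw [Finset.mem_range] at hj
      have h1j : 1 ≤ j := by omega
      have hnat : ℓ * (ℓ - 1).choose (j - 1) = ℓ.choose j * j := by
        have hh := Nat.add_one_mul_choose_eq (ℓ - 1) (j - 1)
        have e1 : ℓ - 1 + 1 = ℓ := by omega
        have e2 : j - 1 + 1 = j := by omega
        rw [e1, e2] at hh
        exact hh
      have hp1 : 0 < (ℓ - 1).choose (j - 1) := Nat.choose_pos (by omega)
      have hcast : (ℓ : ℝ) * ((ℓ - 1).choose (j - 1) : ℝ) = (ℓ.choose j : ℝ) * (j : ℝ) := by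
        exact_mod_cast congrArg (Nat.cast : ℕ → ℝ) hnat
      rw [hαdef]
      unfold alphaCoef
      have hC1 : ((ℓ - 1).choose (j - 1) : ℝ) ≠ 0 := by positivity
      field_simp
      nlinarith [hcast, pow_pos h1c (j-1)]
    rw [Finset.sum_range_succ']
    have hz : (ℓ.choose 0 : ℝ) * (α 0 * (0:ℕ)) = 0 := by push_cast; ring
    rw [hz, add_zero]
    rw [Finset.mul_sum]
    apply Finset.sum_congr rfl
    intro i hi
    have hiℓ := Finset.mem_range.1 hi
    have := hterm (i + 1) (by rw [Finset.mem_range]; omega) (by omega)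
    rw [this]
    congr 1
  -- local optimality per-swap inequality, rearranged
  have hkey : ∀ p ∈ S, ∀ j ∈ L,
      0 ≤ β * (∑ J ∈ 𝒥, α J.card *
        ((g (proj S J) - g ((proj S J).erase p.1))
          - (if j ∈ J then
              (g (insert (h j p) ((proj S J).erase p.1)) - g ((proj S J).erase p.1))
             else 0)))
        + (w p.1 - w (h j p)) := by
    have hPhi : ∀ T : Finset (E × ℕ),
        Phi ℓ γ g T = β * ∑ J ∈ 𝒥, α J.card * g (proj T J) := by
      intro T
      unfold Phi
      rw [← hLdef, ← hcdef, ← h𝒥def, ← hαdef, ← hβdef]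
    intro p hp j hj
    have hloc := hlocal p hp j hj
    rw [hΦf, hΦf, hPhi, hPhi] at hloc
    -- the projection of the swapped configuration on L
    have hprojS'L : proj (insert (h j p, j) (S.erase p)) L
        = insert (h j p) ((proj S L).erase p.1) := by
      rw [hA'J p hp j L]
      rw [if_pos hj]
    have hnotin : h j p ∉ (proj S L).erase p.1 := by
      intro hmem
      have h1 : h j p ∈ proj S L := Finset.mem_of_mem_erase hmem
      have h2 : h j p = p.1 := hhfix j hj p hp h1
      rw [h2] at hmem
      exact Finset.notMem_erase p.1 _ hmem
    have hlS' : l (proj (insert (h j p, j) (S.erase p)) L)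
        = l (proj S L) - w p.1 + w (h j p) := by
      rw [hprojS'L, hl, hl, Finset.sum_insert hnotin,
        Finset.sum_erase_eq_sub (hpA p hp)]
      ring
    -- pointwise difference of the potential sums
    have hptwise : ∀ J ∈ 𝒥,
        α J.card * g (proj S J) - α J.card * g (proj (insert (h j p, j) (S.erase p)) J)
          = α J.card *
            ((g (proj S J) - g ((proj S J).erase p.1))
              - (if j ∈ J then
                  (g (insert (h j p) ((proj S J).erase p.1)) - g ((proj S J).erase p.1))
                 else 0)) := by
      intro J _
      rw [hA'J p hp j J]
      by_cases hjJ : j ∈ J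
      · rw [if_pos hjJ, if_pos hjJ]
        ring
      · rw [if_neg hjJ, if_neg hjJ]
        ring
    have hsum : ∑ J ∈ 𝒥, α J.card *
        ((g (proj S J) - g ((proj S J).erase p.1))
          - (if j ∈ J then
              (g (insert (h j p) ((proj S J).erase p.1)) - g ((proj S J).erase p.1))
             else 0))
        = (∑ J ∈ 𝒥, α J.card * g (proj S J))
          - ∑ J ∈ 𝒥, α J.card * g (proj (insert (h j p, j) (S.erase p)) J) := by
      rw [← Finset.sum_sub_distrib]
      exact (Finset.sum_congr rfl hptwise).symm
    rw [hsum, mul_sub β]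
    rw [hlS'] at hloc
    linarith
  -- sum over p, j and rearrange
  have hT0 : 0 ≤ β * (∑ J ∈ 𝒥, α J.card *
        ((ℓ : ℝ) * (∑ p ∈ S, (g (proj S J) - g ((proj S J).erase p.1)))
          - ∑ j ∈ J, ∑ p ∈ S, (g (insert (h j p) ((proj S J).erase p.1))
              - g ((proj S J).erase p.1))))
      + (ℓ : ℝ) * (l A - l OPT) := by
    have hnn : 0 ≤ ∑ p ∈ S, ∑ j ∈ L,
        (β * (∑ J ∈ 𝒥, α J.card *
          ((g (proj S J) - g ((proj S J).erase p.1))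
            - (if j ∈ J then
                (g (insert (h j p) ((proj S J).erase p.1)) - g ((proj S J).erase p.1))
               else 0)))
          + (w p.1 - w (h j p))) :=
      Finset.sum_nonneg (fun p hp => Finset.sum_nonneg (fun j hj => hkey p hp j hj))
    have hsplit : ∑ p ∈ S, ∑ j ∈ L,
        (β * (∑ J ∈ 𝒥, α J.card *
          ((g (proj S J) - g ((proj S J).erase p.1))
            - (if j ∈ J then
                (g (insert (h j p) ((proj S J).erase p.1)) - g ((proj S J).erase p.1))
               else 0)))
          + (w p.1 - w (h j p)))
        = β * (∑ p ∈ S, ∑ j ∈ L, ∑ J ∈ 𝒥, α J.card *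
          ((g (proj S J) - g ((proj S J).erase p.1))
            - (if j ∈ J then
                (g (insert (h j p) ((proj S J).erase p.1)) - g ((proj S J).erase p.1))
               else 0)))
          + ∑ p ∈ S, ∑ j ∈ L, (w p.1 - w (h j p)) := by
      rw [Finset.mul_sum]
      rw [← Finset.sum_add_distrib]
      apply Finset.sum_congr rfl
      intro p _
      rw [Finset.mul_sum]
      rw [← Finset.sum_add_distrib]
    have hlin : ∑ p ∈ S, ∑ j ∈ L, (w p.1 - w (h j p)) = (ℓ : ℝ) * (l A - l OPT) := by
      rw [Finset.sum_comm]
      have hperj : ∀ j ∈ L, ∑ p ∈ S, (w p.1 - w (h j p)) = l A - l OPT := by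
        intro j hj
        rw [Finset.sum_sub_distrib, hsum_w1, hsum_h j hj w]
        rw [hl OPT]
      rw [Finset.sum_congr rfl hperj, Finset.sum_const, hLcard, nsmul_eq_mul]
    have hmain : ∑ p ∈ S, ∑ j ∈ L, ∑ J ∈ 𝒥, α J.card *
          ((g (proj S J) - g ((proj S J).erase p.1))
            - (if j ∈ J then
                (g (insert (h j p) ((proj S J).erase p.1)) - g ((proj S J).erase p.1))
               else 0))
        = ∑ J ∈ 𝒥, α J.card *
          ((ℓ : ℝ) * (∑ p ∈ S, (g (proj S J) - g ((proj S J).erase p.1)))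
            - ∑ j ∈ J, ∑ p ∈ S, (g (insert (h j p) ((proj S J).erase p.1))
                - g ((proj S J).erase p.1))) := by
      have swap1 : ∑ p ∈ S, ∑ j ∈ L, ∑ J ∈ 𝒥, α J.card *
          ((g (proj S J) - g ((proj S J).erase p.1))
            - (if j ∈ J then
                (g (insert (h j p) ((proj S J).erase p.1)) - g ((proj S J).erase p.1))
               else 0))
          = ∑ J ∈ 𝒥, ∑ p ∈ S, ∑ j ∈ L, α J.card *
          ((g (proj S J) - g ((proj S J).erase p.1))
            - (if j ∈ J then
                (g (insert (h j p) ((proj S J).erase p.1)) - g ((proj S J).erase p.1))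
               else 0)) := by
        rw [Finset.sum_congr rfl (fun p _ => Finset.sum_comm
          (f := fun j J => α J.card *
            ((g (proj S J) - g ((proj S J).erase p.1))
              - (if j ∈ J then
                  (g (insert (h j p) ((proj S J).erase p.1)) - g ((proj S J).erase p.1))
                 else 0))))]
        exact Finset.sum_comm
      rw [swap1]
      apply Finset.sum_congr rfl
      intro J hJ
      have hinner : ∀ p ∈ S, ∑ j ∈ L, α J.card *
          ((g (proj S J) - g ((proj S J).erase p.1))
            - (if j ∈ J then
                (g (insert (h j p) ((proj S J).erase p.1)) - g ((proj S J).erase p.1))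
               else 0))
          = α J.card * ((ℓ : ℝ) * (g (proj S J) - g ((proj S J).erase p.1))
              - ∑ j ∈ J, (g (insert (h j p) ((proj S J).erase p.1))
                  - g ((proj S J).erase p.1))) := by
        intro p _
        have hite : ∑ j ∈ L, (if j ∈ J then
              (g (insert (h j p) ((proj S J).erase p.1)) - g ((proj S J).erase p.1))
            else 0)
            = ∑ j ∈ J, (g (insert (h j p) ((proj S J).erase p.1))
                - g ((proj S J).erase p.1)) := by
          rw [Finset.sum_ite_mem]
          congr 1
          exact Finset.inter_eq_right.2 (hJprop J hJ).1
        calc ∑ j ∈ L, α J.card *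
            ((g (proj S J) - g ((proj S J).erase p.1))
              - (if j ∈ J then
                  (g (insert (h j p) ((proj S J).erase p.1)) - g ((proj S J).erase p.1))
                 else 0))
            = ∑ j ∈ L, (α J.card * (g (proj S J) - g ((proj S J).erase p.1))
              - α J.card * (if j ∈ J then
                  (g (insert (h j p) ((proj S J).erase p.1)) - g ((proj S J).erase p.1))
                 else 0)) := by
              apply Finset.sum_congr rfl
              intro j _
              ring
          _ = (L.card : ℝ) * (α J.card * (g (proj S J) - g ((proj S J).erase p.1)))
              - α J.card * ∑ j ∈ L, (if j ∈ J then
                  (g (insert (h j p) ((proj S J).erase p.1)) - g ((proj S J).erase p.1))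
                 else 0) := by
              rw [Finset.sum_sub_distrib, Finset.sum_const, nsmul_eq_mul, Finset.mul_sum]
          _ = α J.card * ((ℓ : ℝ) * (g (proj S J) - g ((proj S J).erase p.1))
              - ∑ j ∈ J, (g (insert (h j p) ((proj S J).erase p.1))
                  - g ((proj S J).erase p.1))) := by
              rw [hLcard, hite]
              ring
      calc ∑ p ∈ S, ∑ j ∈ L, α J.card *
          ((g (proj S J) - g ((proj S J).erase p.1))
            - (if j ∈ J then
                (g (insert (h j p) ((proj S J).erase p.1)) - g ((proj S J).erase p.1))
               else 0))
          = ∑ p ∈ S, (α J.card * ((ℓ : ℝ) * (g (proj S J) - g ((proj S J).erase p.1))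
              - ∑ j ∈ J, (g (insert (h j p) ((proj S J).erase p.1))
                  - g ((proj S J).erase p.1)))) := Finset.sum_congr rfl hinner
        _ = α J.card * ∑ p ∈ S, ((ℓ : ℝ) * (g (proj S J) - g ((proj S J).erase p.1))
              - ∑ j ∈ J, (g (insert (h j p) ((proj S J).erase p.1))
                  - g ((proj S J).erase p.1))) := by
            rw [Finset.mul_sum]
        _ = α J.card * ((ℓ : ℝ) * (∑ p ∈ S, (g (proj S J) - g ((proj S J).erase p.1)))
              - ∑ p ∈ S, ∑ j ∈ J, (g (insert (h j p) ((proj S J).erase p.1))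
                  - g ((proj S J).erase p.1))) := by
            congr 1
            rw [Finset.sum_sub_distrib, ← Finset.mul_sum]
        _ = α J.card * ((ℓ : ℝ) * (∑ p ∈ S, (g (proj S J) - g ((proj S J).erase p.1)))
              - ∑ j ∈ J, ∑ p ∈ S, (g (insert (h j p) ((proj S J).erase p.1))
                  - g ((proj S J).erase p.1))) := by
            rw [Finset.sum_comm]
    rw [hsplit, hlin, hmain] at hnn
    exact hnn
  -- final assembly
  have hγne : γ ≠ 0 := ne_of_gt hγ0
  have hℓne : (ℓ:ℝ) ≠ 0 := ne_of_gt hℓR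
  have hpowne : ((1+c))^ℓ ≠ 0 := by positivity
  have hc2 : (ℓ:ℝ)/γ * c = γ^2 := by
    rw [hcdef]
    field_simp
  have hperJ : ∀ J ∈ 𝒥,
      α J.card * ((ℓ : ℝ) * (∑ p ∈ S, (g (proj S J) - g ((proj S J).erase p.1)))
        - ∑ j ∈ J, ∑ p ∈ S, (g (insert (h j p) ((proj S J).erase p.1))
            - g ((proj S J).erase p.1)))
      ≤ (ℓ:ℝ)/γ * (α J.card * ((1 + c) * J.card * g (proj S J))
            - ∑ k ∈ J, (α J.card * g (proj S (J.erase k))))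
        - γ^2 * g OPT * (α J.card * (J.card : ℝ)) := by
    intro J hJ
    have hR := hRJ J hJ
    have hexp : ∑ k ∈ J, (g (proj S J) - g (proj S (J.erase k)))
        = (J.card : ℝ) * g (proj S J) - ∑ k ∈ J, g (proj S (J.erase k)) := by
      rw [Finset.sum_sub_distrib, Finset.sum_const, nsmul_eq_mul]
    rw [hexp] at hR
    have hM : (J.card : ℝ) * (γ^2 * (g OPT - g (proj S J)))
        ≤ ∑ j ∈ J, ∑ p ∈ S, (g (insert (h j p) ((proj S J).erase p.1))
            - g ((proj S J).erase p.1)) := by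
      have hMle : ∀ j ∈ J, γ^2 * (g OPT - g (proj S J))
          ≤ ∑ p ∈ S, (g (insert (h j p) ((proj S J).erase p.1))
              - g ((proj S J).erase p.1)) :=
        fun j hjJ => hMj J hJ j ((hJprop J hJ).1 hjJ)
      calc (J.card : ℝ) * (γ^2 * (g OPT - g (proj S J)))
          = ∑ _j ∈ J, γ^2 * (g OPT - g (proj S J)) := by
            rw [Finset.sum_const, nsmul_eq_mul]
        _ ≤ _ := Finset.sum_le_sum hMle
    have hα := (hαpos J.card (hJcard J hJ).1 (hJcard J hJ).2).le
    have hquot : (0:ℝ) ≤ (ℓ:ℝ)/γ := by positivity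
    have h3 : (ℓ:ℝ) * (∑ p ∈ S, (g (proj S J) - g ((proj S J).erase p.1)))
        ≤ (ℓ:ℝ)/γ * ((J.card : ℝ) * g (proj S J) - ∑ k ∈ J, g (proj S (J.erase k))) := by
      have := mul_le_mul_of_nonneg_left hR hquot
      have hdm : (ℓ:ℝ)/γ * γ = (ℓ:ℝ) := div_mul_cancel₀ (ℓ:ℝ) hγne
      have hγcanc : (ℓ:ℝ)/γ * (γ * (∑ p ∈ S, (g (proj S J) - g ((proj S J).erase p.1))))
          = (ℓ:ℝ) * (∑ p ∈ S, (g (proj S J) - g ((proj S J).erase p.1))) := by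
        linear_combination (∑ p ∈ S, (g (proj S J) - g ((proj S J).erase p.1))) * hdm
      linarith [this, hγcanc.ge, hγcanc.le]
    have h4 := mul_le_mul_of_nonneg_left (by linarith :
        ((ℓ : ℝ) * (∑ p ∈ S, (g (proj S J) - g ((proj S J).erase p.1)))
          - ∑ j ∈ J, ∑ p ∈ S, (g (insert (h j p) ((proj S J).erase p.1))
              - g ((proj S J).erase p.1)))
        ≤ ((ℓ:ℝ)/γ * ((J.card : ℝ) * g (proj S J) - ∑ k ∈ J, g (proj S (J.erase k)))
            - (J.card : ℝ) * (γ^2 * (g OPT - g (proj S J))))) hα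
    calc α J.card * ((ℓ : ℝ) * (∑ p ∈ S, (g (proj S J) - g ((proj S J).erase p.1)))
        - ∑ j ∈ J, ∑ p ∈ S, (g (insert (h j p) ((proj S J).erase p.1))
            - g ((proj S J).erase p.1)))
        ≤ α J.card * ((ℓ:ℝ)/γ * ((J.card : ℝ) * g (proj S J)
            - ∑ k ∈ J, g (proj S (J.erase k)))
            - (J.card : ℝ) * (γ^2 * (g OPT - g (proj S J)))) := h4
      _ = (ℓ:ℝ)/γ * (α J.card * ((1 + c) * J.card * g (proj S J))
            - ∑ k ∈ J, (α J.card * g (proj S (J.erase k))))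
        - γ^2 * g OPT * (α J.card * (J.card : ℝ)) := by
          rw [← Finset.mul_sum]
          linear_combination (-(α J.card * (J.card : ℝ) * g (proj S J))) * hc2
  have hsum_le : ∑ J ∈ 𝒥, (α J.card *
        ((ℓ : ℝ) * (∑ p ∈ S, (g (proj S J) - g ((proj S J).erase p.1)))
          - ∑ j ∈ J, ∑ p ∈ S, (g (insert (h j p) ((proj S J).erase p.1))
              - g ((proj S J).erase p.1))))
      ≤ (ℓ:ℝ)/γ * ((ℓ : ℝ) * (1 + c) ^ ℓ * g A)
        - γ^2 * g OPT * ((ℓ : ℝ) * ∑ i ∈ Finset.range ℓ, (1 + c) ^ i) := by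
    calc ∑ J ∈ 𝒥, (α J.card *
        ((ℓ : ℝ) * (∑ p ∈ S, (g (proj S J) - g ((proj S J).erase p.1)))
          - ∑ j ∈ J, ∑ p ∈ S, (g (insert (h j p) ((proj S J).erase p.1))
              - g ((proj S J).erase p.1))))
        ≤ ∑ J ∈ 𝒥, ((ℓ:ℝ)/γ * (α J.card * ((1 + c) * J.card * g (proj S J))
            - ∑ k ∈ J, (α J.card * g (proj S (J.erase k))))
          - γ^2 * g OPT * (α J.card * (J.card : ℝ))) := Finset.sum_le_sum hperJ
      _ = (ℓ:ℝ)/γ * (∑ J ∈ 𝒥, α J.card * ((1 + c) * J.card * g (proj S J))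
            - ∑ J ∈ 𝒥, ∑ k ∈ J, (α J.card * g (proj S (J.erase k))))
          - γ^2 * g OPT * ∑ J ∈ 𝒥, (α J.card * (J.card : ℝ)) := by
          rw [Finset.sum_sub_distrib, ← Finset.mul_sum, ← Finset.mul_sum,
            Finset.sum_sub_distrib]
      _ = (ℓ:ℝ)/γ * ((ℓ : ℝ) * (1 + c) ^ ℓ * g A)
          - γ^2 * g OPT * ((ℓ : ℝ) * ∑ i ∈ Finset.range ℓ, (1 + c) ^ i) := by
          rw [hident1, hident2]
  have hT1 : 0 ≤ β * ((ℓ:ℝ)/γ * ((ℓ : ℝ) * (1 + c) ^ ℓ * g A)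
        - γ^2 * g OPT * ((ℓ : ℝ) * ∑ i ∈ Finset.range ℓ, (1 + c) ^ i))
      + (ℓ : ℝ) * (l A - l OPT) := by
    have := mul_le_mul_of_nonneg_left hsum_le hβpos.le
    linarith [hT0]
  have hgeom : c * ∑ i ∈ Finset.range ℓ, (1 + c) ^ i = (1 + c) ^ ℓ - 1 := by
    have hg := geom_sum_mul (1 + c) ℓ
    have : (1 + c - 1) = c := by ring
    rw [this] at hg
    linear_combination hg
  have e1 : β * ((ℓ:ℝ)/γ * ((ℓ : ℝ) * (1 + c) ^ ℓ * g A)) = (ℓ : ℝ) * g A := by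
    rw [hβdef, hzpow]
    field_simp
  have e2 : β * (γ^2 * g OPT * ((ℓ : ℝ) * ∑ i ∈ Finset.range ℓ, (1 + c) ^ i))
      = (ℓ : ℝ) * ((1 - ((1 + c) ^ ℓ)⁻¹) * g OPT) := by
    rw [hβdef, hzpow]
    have hγ3 : γ^3 = c * ℓ := by
      rw [hcdef]
      field_simp
    have key : γ^3 * g OPT * (∑ i ∈ Finset.range ℓ, (1 + c) ^ i)
        = (ℓ:ℝ) * ((1 + c) ^ ℓ - 1) * g OPT := by
      linear_combination (g OPT * (ℓ:ℝ)) * hgeom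
        + (g OPT * (∑ i ∈ Finset.range ℓ, (1 + c) ^ i)) * hγ3
    have hℓinv : (ℓ:ℝ) * (ℓ:ℝ)⁻¹ = 1 := mul_inv_cancel₀ hℓne
    have hPinv : (1 + c) ^ ℓ * ((1 + c) ^ ℓ)⁻¹ = 1 := mul_inv_cancel₀ hpowne
    linear_combination
      (γ^3 * g OPT * (∑ i ∈ Finset.range ℓ, (1 + c) ^ i) * ((1 + c) ^ ℓ)⁻¹) * hℓinv
      + (((1 + c) ^ ℓ)⁻¹) * key + ((ℓ:ℝ) * g OPT) * hPinv
  have hT2 : 0 ≤ (ℓ : ℝ) * g A - (ℓ : ℝ) * ((1 - ((1 + c) ^ ℓ)⁻¹) * g OPT)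
      + (ℓ : ℝ) * (l A - l OPT) := by
    have hdistr : β * ((ℓ:ℝ)/γ * ((ℓ : ℝ) * (1 + c) ^ ℓ * g A)
          - γ^2 * g OPT * ((ℓ : ℝ) * ∑ i ∈ Finset.range ℓ, (1 + c) ^ i))
        = β * ((ℓ:ℝ)/γ * ((ℓ : ℝ) * (1 + c) ^ ℓ * g A))
          - β * (γ^2 * g OPT * ((ℓ : ℝ) * ∑ i ∈ Finset.range ℓ, (1 + c) ^ i)) := by
      ring
    rw [hdistr, e1, e2] at hT1
    linarith
  rw [ge_iff_le, hzpow]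
  nlinarith [hT2, hℓR]
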